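/- Let C be a unital algebra over ℂ, let N and L be positive integers, let u₁,…,u_N ∈ C be invertible elements, and let (ρ_{i,j})_{1≤i<j≤N} be complex numbers of absolute value 1 such that u_i u_j = ρ_{i,j} u_j u_i for all 1 ≤ i < j ≤ N. Let φ : C → ℂ be a linear functional such that φ(u₁^{λ₁}⋯u_N^{λ_N}) = 0 for every nonzero (λ₁,…,λ_N) ∈ ℤ^N with |λ_j| < L for all j. Let n < L be a positive integer, i₁,…,i_n ∈ {1,…,N} and ε(1),…,ε(n) ∈ {1,−1}. If there exists j ∈ {1,…,N} such that Σ_{m : i_m = j} ε(m) ≠ 0, then φ(u_{i₁}^{ε(1)}⋯u_{i_n}^{ε(n)}) = 0. -/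

import Mathlib

noncomputable section

namespace WordVanishAux

variable {C : Type*} [Ring C] [Algebra ℂ C]

/-- Scalar units embedded in `Cˣ`. -/
def eHom (C : Type*) [Ring C] [Algebra ℂ C] : ℂˣ →* Cˣ :=
  Units.map (algebraMap ℂ C).toMonoidHom

lemma eHom_central (c : ℂˣ) (x : Cˣ) : eHom C c * x = x * eHom C c := by
  apply Units.ext
  simpa [eHom] using (Algebra.commutes (c : ℂ) (x : C))

/-- `x` scalar-commutes with `y`. -/
def SC (x y : Cˣ) : Prop := ∃ c : ℂˣ, x * y = eHom C c * (y * x)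

lemma SC.symm {x y : Cˣ} (h : SC x y) : SC y x := by
  obtain ⟨c, hc⟩ := h
  exact ⟨c⁻¹, by rw [hc, map_inv, ← mul_assoc, inv_mul_cancel, one_mul]⟩

lemma SC.refl (x : Cˣ) : SC x x := ⟨1, by simp⟩

lemma SC.one_right (x : Cˣ) : SC x 1 := ⟨1, by simp⟩

lemma SC.mul_right {x y z : Cˣ} (h1 : SC x y) (h2 : SC x z) : SC x (y * z) := by
  obtain ⟨c, hc⟩ := h1
  obtain ⟨d, hd⟩ := h2
  refine ⟨c * d, ?_⟩
  calc x * (y * z) = (x * y) * z := by rw [mul_assoc]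
    _ = eHom C c * (y * (x * z)) := by rw [hc]; rw [mul_assoc, mul_assoc]
    _ = eHom C c * (y * (eHom C d * (z * x))) := by rw [hd]
    _ = eHom C (c * d) * (y * z * x) := by
        rw [← mul_assoc y, ← eHom_central d y, map_mul]
        group

lemma SC.inv_right {x y : Cˣ} (h : SC x y) : SC x y⁻¹ := by
  obtain ⟨c, hc⟩ := h
  refine ⟨c⁻¹, ?_⟩
  have h2 : y⁻¹ * (x * y) * y⁻¹ = y⁻¹ * (eHom C c * (y * x)) * y⁻¹ := by rw [hc]
  have h3 : y⁻¹ * x = eHom C c * (x * y⁻¹) := by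
    calc y⁻¹ * x = y⁻¹ * (x * y) * y⁻¹ := by group
      _ = y⁻¹ * (eHom C c * (y * x)) * y⁻¹ := h2
      _ = eHom C c * (x * y⁻¹) := by
        rw [← mul_assoc y⁻¹ (eHom C c), ← eHom_central c y⁻¹]; group
  calc x * y⁻¹ = eHom C c⁻¹ * (eHom C c * (x * y⁻¹)) := by rw [map_inv]; group
    _ = eHom C c⁻¹ * (y⁻¹ * x) := by rw [h3]

lemma SC.zpow_right {x y : Cˣ} (h : SC x y) : ∀ n : ℤ, SC x (y ^ n) := by
  have hnat : ∀ k : ℕ, SC x (y ^ k) := by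
    intro k
    induction k with
    | zero => simpa using SC.one_right x
    | succ k ih => rw [pow_succ]; exact ih.mul_right h
  intro n
  cases n with
  | ofNat k => simpa using hnat k
  | negSucc k => rw [zpow_negSucc]; exact (hnat (k + 1)).inv_right

lemma SC.zpow {x y : Cˣ} (h : SC x y) (m n : ℤ) : SC (x ^ m) (y ^ n) :=
  ((h.zpow_right n).symm.zpow_right m).symm

lemma SC.list_prod {x : Cˣ} {l : List Cˣ} (h : ∀ a ∈ l, SC x a) : SC x l.prod := by
  induction l with
  | nil => simpa using SC.one_right x
  | cons a l ih =>
    rw [List.prod_cons]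
    exact (h a (List.mem_cons_self)).mul_right (ih fun b hb => h b (List.mem_cons_of_mem a hb))

/-- Insertion lemma: multiplying an ordered product on the left by `x` can be absorbed
into position `k`, up to a scalar. -/
lemma insert_lemma : ∀ {M : ℕ} (g : Fin M → Cˣ) (k : Fin M) (x : Cˣ),
    (∀ j, SC x (g j)) → ∃ c : ℂˣ,
      x * (List.ofFn g).prod = eHom C c * (List.ofFn (Function.update g k (x * g k))).prod := by
  intro M
  induction M with
  | zero => exact fun g k => k.elim0
  | succ M ih =>
    intro g k x hx
    rw [List.ofFn_succ, List.prod_cons]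
    cases k using Fin.cases with
    | zero =>
      refine ⟨1, ?_⟩
      have htail0 : (List.ofFn fun i : Fin M => Function.update g 0 (x * g 0) i.succ)
          = List.ofFn fun i : Fin M => g i.succ :=
        congrArg List.ofFn (funext fun j => Function.update_of_ne (Fin.succ_ne_zero j) _ _)
      rw [map_one, one_mul, List.ofFn_succ, List.prod_cons, Function.update_self, htail0,
        mul_assoc]
    | succ k' =>
      obtain ⟨c₁, hc₁⟩ := hx 0
      obtain ⟨c₂, hc₂⟩ := ih (fun j => g j.succ) k' x (fun j => hx _)
      refine ⟨c₁ * c₂, ?_⟩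
      have htail : (List.ofFn fun i : Fin M => Function.update g k'.succ (x * g k'.succ) i.succ)
          = List.ofFn (Function.update (fun j : Fin M => g j.succ) k' (x * g k'.succ)) := by
        refine congrArg List.ofFn (funext fun j => ?_)
        by_cases hj : j = k'
        · subst hj; simp
        · rw [Function.update_of_ne (fun hh => hj (Fin.succ_injective _ hh)),
            Function.update_of_ne hj]
      calc x * (g 0 * (List.ofFn fun i : Fin M => g i.succ).prod)
          = (x * g 0) * (List.ofFn fun i : Fin M => g i.succ).prod := by rw [mul_assoc]
        _ = eHom C c₁ * (g 0 * (x * (List.ofFn fun i : Fin M => g i.succ).prod)) := by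
            rw [hc₁]; group
        _ = eHom C c₁ * (g 0 * (eHom C c₂ *
              (List.ofFn (Function.update (fun j : Fin M => g j.succ) k' (x * g k'.succ))).prod))
            := by rw [hc₂]
        _ = eHom C (c₁ * c₂) * (List.ofFn (Function.update g k'.succ (x * g k'.succ))).prod := by
            rw [List.ofFn_succ, List.prod_cons, Function.update_of_ne (Fin.succ_ne_zero k').symm,
              htail, ← mul_assoc (g 0), ← eHom_central c₂ (g 0), map_mul]
            group

def expOf {N : ℕ} (l : List (Fin N × ℤ)) (j : Fin N) : ℤ :=
  (l.map fun p => if p.1 = j then p.2 else 0).sum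

lemma rearrange {N : ℕ} (u : Fin N → Cˣ) (hsc : ∀ i j, SC (u i) (u j))
    (l : List (Fin N × ℤ)) : ∃ c : ℂˣ,
      (l.map fun p => u p.1 ^ p.2).prod
        = eHom C c * (List.ofFn fun j => u j ^ expOf l j).prod := by
  induction l with
  | nil =>
    refine ⟨1, ?_⟩
    simp [expOf]
  | cons p l ih =>
    obtain ⟨c, hc⟩ := ih
    obtain ⟨c', hc'⟩ := insert_lemma (fun j => u j ^ expOf l j) p.1 (u p.1 ^ p.2)
      (fun j => (hsc p.1 j).zpow _ _)
    refine ⟨c * c', ?_⟩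
    have hupd : Function.update (fun j => u j ^ expOf l j) p.1
          ((u p.1 ^ p.2) * (fun j => u j ^ expOf l j) p.1)
        = fun j => u j ^ expOf (p :: l) j := by
      funext j
      by_cases hj : j = p.1
      · subst hj
        rw [Function.update_self, ← zpow_add]
        congr 1
        simp [expOf]
      · rw [Function.update_of_ne hj]
        have : p.1 ≠ j := Ne.symm hj
        congr 1
        simp [expOf, this]
    calc (List.map (fun p => u p.1 ^ p.2) (p :: l)).prod
        = u p.1 ^ p.2 * (List.map (fun p => u p.1 ^ p.2) l).prod := by
          rw [List.map_cons, List.prod_cons]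
      _ = u p.1 ^ p.2 * (eHom C c * (List.ofFn fun j => u j ^ expOf l j).prod) := by rw [hc]
      _ = eHom C c * (u p.1 ^ p.2 * (List.ofFn fun j => u j ^ expOf l j).prod) := by
          rw [← mul_assoc, ← eHom_central c, mul_assoc]
      _ = eHom C c * (eHom C c' * (List.ofFn (Function.update (fun j => u j ^ expOf l j) p.1
            ((u p.1 ^ p.2) * (fun j => u j ^ expOf l j) p.1))).prod) := by rw [hc']
      _ = eHom C (c * c') * (List.ofFn fun j => u j ^ expOf (p :: l) j).prod := by
          rw [hupd, map_mul, mul_assoc]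

open scoped Classical in
theorem main
    (C : Type*) [Ring C] [Algebra ℂ C] (N L : ℕ) (hN : 0 < N) (hL : 0 < L)
    (u : Fin N → Cˣ) (ρ : Fin N → Fin N → ℂ)
    (hρ : ∀ i j : Fin N, i < j → ‖ρ i j‖ = 1)
    (hcomm : ∀ i j : Fin N, i < j →
      (u i : C) * (u j : C) = ρ i j • ((u j : C) * (u i : C)))
    (φ : C →ₗ[ℂ] ℂ)
    (hφ : ∀ lam : Fin N → ℤ, lam ≠ 0 → (∀ j, (lam j).natAbs < L) →
      φ ((List.ofFn fun j => ((u j ^ lam j : Cˣ) : C)).prod) = 0)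
    (n : ℕ) (hn : 0 < n) (hnL : n < L) (i : Fin n → Fin N) (ε : Fin n → ℤ)
    (hε : ∀ m, ε m = 1 ∨ ε m = -1)
    (hj : ∃ j : Fin N, ∑ m ∈ Finset.univ.filter (fun m => i m = j), ε m ≠ 0) :
    φ ((List.ofFn fun m => ((u (i m) ^ ε m : Cˣ) : C)).prod) = 0 := by
  -- base scalar commutation between the generators
  have hlt : ∀ a b : Fin N, a < b → SC (u a) (u b) := by
    intro a b hab
    have hne : ρ a b ≠ 0 := by
      intro h0
      have := hρ a b hab
      rw [h0] at this
      simp at this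
    refine ⟨Units.mk0 (ρ a b) hne, ?_⟩
    apply Units.ext
    simpa [eHom, Algebra.smul_def] using hcomm a b hab
  have hsc : ∀ a b : Fin N, SC (u a) (u b) := by
    intro a b
    rcases lt_trichotomy a b with h | h | h
    · exact hlt a b h
    · exact h ▸ SC.refl (u a)
    · exact (hlt b a h).symm
  -- rearrange the word into normal form
  set l : List (Fin N × ℤ) := List.ofFn (fun m => (i m, ε m)) with hl
  obtain ⟨c, hc⟩ := rearrange u hsc l
  have hmap : (l.map fun p => u p.1 ^ p.2) = List.ofFn fun m => u (i m) ^ ε m := by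
    rw [hl, List.map_ofFn]
    rfl
  rw [hmap] at hc
  set lam : Fin N → ℤ := fun j => expOf l j with hlam
  -- identify the exponents
  have hlam_eq : ∀ j, lam j = ∑ m ∈ Finset.univ.filter (fun m => i m = j), ε m := by
    intro j
    rw [hlam]
    simp only [expOf, hl, List.map_ofFn]
    rw [show ((fun p : Fin N × ℤ => if p.1 = j then p.2 else 0) ∘ fun m => (i m, ε m))
        = fun m => if i m = j then ε m else 0 from rfl, List.sum_ofFn,
      Finset.sum_filter]
  -- lam is nonzero
  obtain ⟨j₀, hj₀⟩ := hj
  have hlam_ne : lam ≠ 0 := by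
    intro h0
    apply hj₀
    rw [← hlam_eq j₀, h0]
    rfl
  -- lam is small
  have hlam_small : ∀ j, (lam j).natAbs < L := by
    intro j
    have habs : |lam j| ≤ (n : ℤ) := by
      rw [hlam_eq j]
      calc |∑ m ∈ Finset.univ.filter (fun m => i m = j), ε m|
          ≤ ∑ m ∈ Finset.univ.filter (fun m => i m = j), |ε m| :=
            Finset.abs_sum_le_sum_abs _ _
        _ = ∑ m ∈ Finset.univ.filter (fun m => i m = j), 1 := by
            refine Finset.sum_congr rfl fun m _ => ?_
            rcases hε m with h | h <;> simp [h]
        _ = ((Finset.univ.filter (fun m => i m = j)).card : ℤ) := by simp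
        _ ≤ (n : ℤ) := by
            exact_mod_cast (Finset.card_filter_le _ _).trans (by simp)
    rw [Int.abs_eq_natAbs] at habs
    omega
  -- take values in C and apply φ
  have hval : ∀ {k : ℕ} (f : Fin k → Cˣ),
      (((List.ofFn f).prod : Cˣ) : C) = (List.ofFn fun m => ((f m : C))).prod := by
    intro k f
    calc (((List.ofFn f).prod : Cˣ) : C)
        = ((List.ofFn f).map (Units.coeHom C)).prod := (List.prod_hom _ (Units.coeHom C)).symm
      _ = (List.ofFn fun m => ((f m : C))).prod := by rw [List.map_ofFn]; rfl
  have hcval := congrArg (Units.val) hc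
  rw [hval, Units.val_mul, hval] at hcval
  rw [hcval]
  have : ((eHom C c : Cˣ) : C) = algebraMap ℂ C (c : ℂ) := rfl
  rw [this, ← Algebra.smul_def, map_smul, smul_eq_mul, hφ lam hlam_ne hlam_small, mul_zero]

end WordVanishAux

open scoped Classical in
/-- Let `u₁, …, u_N` be invertible elements of a unital `ℂ`-algebra with
`u_i u_j = ρ_{i,j} u_j u_i` for `i < j`, where `|ρ_{i,j}| = 1`, and let `φ` be
a linear functional that kills all words `u₁^{λ₁} ⋯ u_N^{λ_N}` with
`(λ₁,…,λ_N) ≠ 0` and `|λ_j| < L`. If `n < L`, `ε(m) ∈ {1, -1}`, and for some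
index `j` the total exponent `Σ_{m : i_m = j} ε(m)` is nonzero, then
`φ(u_{i₁}^{ε(1)} ⋯ u_{i_n}^{ε(n)}) = 0`. -/
theorem word_vanishes_of_unbalanced
    (C : Type*) [Ring C] [Algebra ℂ C] (N L : ℕ) (hN : 0 < N) (hL : 0 < L)
    (u : Fin N → Cˣ) (ρ : Fin N → Fin N → ℂ)
    (hρ : ∀ i j : Fin N, i < j → ‖ρ i j‖ = 1)
    (hcomm : ∀ i j : Fin N, i < j →
      (u i : C) * (u j : C) = ρ i j • ((u j : C) * (u i : C)))
    (φ : C →ₗ[ℂ] ℂ)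
    (hφ : ∀ lam : Fin N → ℤ, lam ≠ 0 → (∀ j, (lam j).natAbs < L) →
      φ ((List.ofFn fun j => ((u j ^ lam j : Cˣ) : C)).prod) = 0)
    (n : ℕ) (hn : 0 < n) (hnL : n < L) (i : Fin n → Fin N) (ε : Fin n → ℤ)
    (hε : ∀ m, ε m = 1 ∨ ε m = -1)
    (hj : ∃ j : Fin N, ∑ m ∈ Finset.univ.filter (fun m => i m = j), ε m ≠ 0) :
    φ ((List.ofFn fun m => ((u (i m) ^ ε m : Cˣ) : C)).prod) = 0 :=
  WordVanishAux.main C N L hN hL u ρ hρ hcomm φ hφ n hn hnL i ε hε hj
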